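/- Let T be the type of binary trees with natural-number leaves: tip : ℕ → T and node : T → T → T, with size |tip u| = 1 and |node l r| = 1 + |l| + |r|. Define f : T → T → T by f (node x y) (node x' y') = node (f x y) (f x' y'), f (node x y) (tip u) = tip u, f (tip u) (node x y) = tip u, and f (tip u) (tip v) = tip (q u v) where q : ℕ → ℕ → ℕ is any function. Then f is total (the recursion terminates, since |x| + |y| < |node x y| + |node x' y'|) and for all trees s, t, |f s t| ≤ |s| + |t|. -/

import Mathlib

inductive NTree where
  | tip : ℕ → NTree
  | node : NTree → NTree → NTree

def NTree.size : NTree → ℕ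
  | .tip _ => 1
  | .node l r => 1 + l.size + r.size

def treeF (q : ℕ → ℕ → ℕ) : NTree → NTree → NTree
  | .node x y, .node x' y' => .node (treeF q x y) (treeF q x' y')
  | .node _ _, .tip u => .tip u
  | .tip u, .node _ _ => .tip u
  | .tip u, .tip v => .tip (q u v)
termination_by s t => s.size + t.size
decreasing_by
  all_goals simp [NTree.size]; omega

theorem treeF_size_bound (q : ℕ → ℕ → ℕ) :
    ∀ s t : NTree, (treeF q s t).size ≤ s.size + t.size := by
  intro s t
  induction s, t using treeF.induct with
  | case1 x y x' y' ih1 ih2 => simp [treeF, NTree.size]; omega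
  | case2 => simp [treeF, NTree.size]
  | case3 => simp [treeF, NTree.size]
  | case4 => simp [treeF, NTree.size]
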